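/- In the finite-partition expert model: fix a state r, experts j = 1,...,m with fixed vectors a_j ∈ R^p and noisy feedback ĝ_{j,s,i} = g_{j,s} + ε_{j,s,i} where the ε_{j,s,i} are independent, mean zero, with common variance v, and g_{j,s} = g_{j,r} for all s in a pooling class F of size K containing r. Let the BP estimator be Ĝ = ∑_j a_j (1/n)∑_i ε_{j,r,i} + G_true and the SG estimator be G̃ = ∑_j a_j (1/(nK))∑_{s∈F}∑_i ε_{j,s,i} + G_true, where G_true = ∑_j a_j g_{j,r}. Then E||Ĝ - G_true||² = K · E||G̃ - G_true||². -/

import Mathlib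

open MeasureTheory ProbabilityTheory

section Aux

variable {Ω : Type*} {mΩ : MeasurableSpace Ω} {μ : Measure Ω}

lemma aux_integrable_mul [IsFiniteMeasure μ] {f g : Ω → ℝ}
    (hf : MemLp f 2 μ) (hg : MemLp g 2 μ) :
    Integrable (fun ω => f ω * g ω) μ := by
  have h : MemLp (f • g) 1 μ :=
    hg.smul (p := 2) (q := 2) (r := 1) hf
      (hpqr := ⟨by simpa using ENNReal.inv_two_add_inv_two⟩)
  exact h.integrable le_rfl

lemma aux_mse [IsProbabilityMeasure μ]
    {ι : Type*} [Fintype ι] (m p : ℕ) (a : Fin m → EuclideanSpace ℝ (Fin p))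
    (X : Fin m × ι → Ω → ℝ) (hmem : ∀ q, MemLp (X q) 2 μ)
    (hindep : ∀ q q', q ≠ q' → IndepFun (X q) (X q') μ)
    (hmean : ∀ q, (∫ ω, X q ω ∂μ) = 0)
    (v : ℝ) (hv : ∀ q, (∫ ω, (X q ω) ^ 2 ∂μ) = v) (c : ℝ) :
    ∫ ω, ‖∑ j, (c * ∑ t, X (j, t) ω) • a j‖ ^ 2 ∂μ
      = c ^ 2 * (Fintype.card ι) * v * ∑ j, ‖a j‖ ^ 2 := by
  classical
  have hXint : ∀ q, Integrable (X q) μ := fun q => (hmem q).integrable one_le_two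
  -- scalar covariance
  have hcov : ∀ q q', (∫ ω, X q ω * X q' ω ∂μ) = if q = q' then v else 0 := by
    intro q q'
    by_cases h : q = q'
    · subst h
      rw [if_pos rfl, ← hv q]
      congr 1; ext ω; ring
    · rw [if_neg h]
      have h2 := (hindep q q' h).integral_mul_eq_mul_integral (hXint q).aestronglyMeasurable (hXint q').aestronglyMeasurable
      rw [hmean q, hmean q', mul_zero] at h2
      simpa [Pi.mul_apply] using h2
  set Y : Fin m → Ω → ℝ := fun j ω => c * ∑ t, X (j, t) ω with hY
  have hYmem : ∀ j, MemLp (Y j) 2 μ := by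
    intro j
    have h := (memLp_finset_sum' (μ := μ) Finset.univ
      (fun (t : ι) (_ : t ∈ Finset.univ) => hmem (j, t))).const_mul c
    simpa [hY, Finset.sum_apply] using h
  have hYint : ∀ j k, Integrable (fun ω => Y j ω * Y k ω) μ := fun j k =>
    aux_integrable_mul (hYmem j) (hYmem k)
  have hYcov : ∀ j k, (∫ ω, Y j ω * Y k ω ∂μ)
      = if j = k then c ^ 2 * (Fintype.card ι) * v else 0 := by
    intro j k
    have hexp : ∀ ω, Y j ω * Y k ω
        = ∑ t : ι, ∑ t' : ι, c ^ 2 * (X (j, t) ω * X (k, t') ω) := by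
      intro ω
      simp only [hY, Finset.mul_sum, Finset.sum_mul]
      rw [Finset.sum_comm]
      refine Finset.sum_congr rfl fun t _ => Finset.sum_congr rfl fun t' _ => by ring
    calc (∫ ω, Y j ω * Y k ω ∂μ)
        = ∫ ω, ∑ t : ι, ∑ t' : ι, c ^ 2 * (X (j, t) ω * X (k, t') ω) ∂μ := by
          simp_rw [hexp]
      _ = ∑ t : ι, ∑ t' : ι, c ^ 2 * ∫ ω, X (j, t) ω * X (k, t') ω ∂μ := by
          rw [integral_finset_sum]
          · exact Finset.sum_congr rfl fun t _ => by
              rw [integral_finset_sum]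
              · exact Finset.sum_congr rfl fun t' _ => integral_const_mul _ _
              · exact fun t' _ =>
                  (aux_integrable_mul (hmem (j, t)) (hmem (k, t'))).const_mul _
          · exact fun t _ => integrable_finset_sum _ fun t' _ =>
              (aux_integrable_mul (hmem (j, t)) (hmem (k, t'))).const_mul _
      _ = ∑ t : ι, ∑ t' : ι, c ^ 2 * (if (j, t) = ((k, t') : Fin m × ι) then v else 0) := by
          refine Finset.sum_congr rfl fun t _ => Finset.sum_congr rfl fun t' _ => ?_
          rw [hcov]
      _ = if j = k then c ^ 2 * (Fintype.card ι) * v else 0 := by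
          by_cases h : j = k
          · subst h
            rw [if_pos rfl]
            simp only [Prod.mk.injEq, true_and, mul_ite, mul_zero, Finset.sum_ite_eq,
              Finset.mem_univ, if_true]
            rw [Finset.sum_const, nsmul_eq_mul, Finset.card_univ]
            ring
          · rw [if_neg h]
            refine Finset.sum_eq_zero fun t _ => Finset.sum_eq_zero fun t' _ => ?_
            rw [if_neg (by simp [Prod.mk.injEq, h]), mul_zero]
  -- expand the norm
  have hnorm : ∀ ω, ‖∑ j, Y j ω • a j‖ ^ 2
      = ∑ j, ∑ k, (Y j ω * Y k ω) * (inner ℝ (a j) (a k) : ℝ) := by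
    intro ω
    rw [← real_inner_self_eq_norm_sq, sum_inner]
    refine Finset.sum_congr rfl fun j _ => ?_
    rw [inner_sum]
    refine Finset.sum_congr rfl fun k _ => ?_
    rw [real_inner_smul_left, real_inner_smul_right]; ring
  calc ∫ ω, ‖∑ j, Y j ω • a j‖ ^ 2 ∂μ
      = ∫ ω, ∑ j, ∑ k, (Y j ω * Y k ω) * (inner ℝ (a j) (a k) : ℝ) ∂μ := by
        simp_rw [hnorm]
    _ = ∑ j, ∑ k, (∫ ω, Y j ω * Y k ω ∂μ) * (inner ℝ (a j) (a k) : ℝ) := by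
        rw [integral_finset_sum]
        · exact Finset.sum_congr rfl fun j _ => by
            rw [integral_finset_sum]
            · exact Finset.sum_congr rfl fun k _ => integral_mul_const _ _
            · exact fun k _ => (hYint j k).mul_const _
        · exact fun j _ => integrable_finset_sum _ fun k _ => (hYint j k).mul_const _
    _ = ∑ j, ∑ k, (if j = k then c ^ 2 * (Fintype.card ι) * v else 0)
          * (inner ℝ (a j) (a k) : ℝ) := by
        refine Finset.sum_congr rfl fun j _ => Finset.sum_congr rfl fun k _ => ?_
        rw [hYcov]
    _ = c ^ 2 * (Fintype.card ι) * v * ∑ j, ‖a j‖ ^ 2 := by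
        rw [Finset.mul_sum]
        refine Finset.sum_congr rfl fun j _ => ?_
        rw [Finset.sum_eq_single j]
        · rw [if_pos rfl, real_inner_self_eq_norm_sq]
        · intro k _ hk; rw [if_neg (Ne.symm hk), zero_mul]
        · intro h; exact absurd (Finset.mem_univ j) h

end Aux

/-- Finite-partition expert model (Lemma 5 / Theorem 5): the backpropagation estimator,
which averages `n` noise samples at state `r`, has MSE exactly `K` times that of the
synthetic-gradient estimator, which pools `n·K` samples over the equivalence class. -/
theorem expert_network_mse_ratio
    {Ω : Type*} {mΩ : MeasurableSpace Ω} {μ : Measure Ω} [IsProbabilityMeasure μ]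
    (m p K n : ℕ) (hK : 0 < K) (hn : 0 < n)
    (a : Fin m → EuclideanSpace ℝ (Fin p))
    (ε : Fin m × Fin K × Fin n → Ω → ℝ)
    (hmem : ∀ q, MemLp (ε q) 2 μ)
    (hindep : iIndepFun ε μ)
    (hmean : ∀ q, (∫ ω, ε q ω ∂μ) = 0)
    (v : ℝ) (hv : ∀ q, (∫ ω, (ε q ω) ^ 2 ∂μ) = v)
    (r : Fin K)
    (g : Fin m → Fin K → ℝ) (hg : ∀ j s, g j s = g j r)
    (Gtrue : EuclideanSpace ℝ (Fin p)) (hGtrue : Gtrue = ∑ j, g j r • a j) :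
    ∫ ω, ‖(∑ j, ((n : ℝ)⁻¹ * ∑ i, ε (j, r, i) ω) • a j + Gtrue) - Gtrue‖ ^ 2 ∂μ
      = K * ∫ ω, ‖(∑ j, (((n : ℝ) * K)⁻¹ * ∑ s, ∑ i, ε (j, s, i) ω) • a j + Gtrue)
          - Gtrue‖ ^ 2 ∂μ := by
  -- LHS via aux_mse with index type Fin n
  have hL : ∫ ω, ‖(∑ j, ((n : ℝ)⁻¹ * ∑ i, ε (j, r, i) ω) • a j + Gtrue) - Gtrue‖ ^ 2 ∂μ
      = ((n : ℝ)⁻¹) ^ 2 * (Fintype.card (Fin n)) * v * ∑ j, ‖a j‖ ^ 2 := by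
    have := aux_mse (μ := μ) m p a (fun q : Fin m × Fin n => ε (q.1, r, q.2))
      (fun q => hmem _)
      (fun q q' h => hindep.indepFun (fun hc => h (by
        have h1 : q.1 = q'.1 := congrArg (fun x : Fin m × Fin K × Fin n => x.1) hc
        have h2 : q.2 = q'.2 := congrArg (fun x : Fin m × Fin K × Fin n => x.2.2) hc
        exact Prod.ext h1 h2)))
      (fun q => hmean _) v (fun q => hv _) ((n : ℝ)⁻¹)
    simpa [add_sub_cancel_right] using this
  -- RHS via aux_mse with index type Fin K × Fin n
  have hR : ∫ ω, ‖(∑ j, (((n : ℝ) * K)⁻¹ * ∑ s, ∑ i, ε (j, s, i) ω) • a j + Gtrue)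
          - Gtrue‖ ^ 2 ∂μ
      = (((n : ℝ) * K)⁻¹) ^ 2 * (Fintype.card (Fin K × Fin n)) * v * ∑ j, ‖a j‖ ^ 2 := by
    have := aux_mse (μ := μ) m p a ε
      (fun q => hmem _)
      (fun q q' h => hindep.indepFun h)
      (fun q => hmean _) v (fun q => hv _) (((n : ℝ) * K)⁻¹)
    simp_rw [Fintype.sum_prod_type] at this
    simpa [add_sub_cancel_right] using this
  rw [hL, hR]
  have hn0 : (n : ℝ) ≠ 0 := Nat.cast_ne_zero.mpr hn.ne'
  have hK0 : (K : ℝ) ≠ 0 := Nat.cast_ne_zero.mpr hK.ne'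
  simp only [Fintype.card_fin, Fintype.card_prod, Nat.cast_mul]
  field_simp
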